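/- Let m be a Herglotz function with representation m(z) = c + dz + ∫_ℝ (1/(λ−z) − λ/(1+λ²)) dω(λ). If there exists L > 0 with 0 ≤ Im m(z) ≤ L for all z ∈ ℂ₊, then d = 0 and the measure ω is absolutely continuous with respect to Lebesgue measure with density bounded by L/π. -/

import Mathlib

open MeasureTheory Set Filter Topology

section HerglotzAux

open Metric

private lemma herg_im_eq (z : ℂ) (t : ℝ) :
    (1 / ((t : ℂ) - z) - (t : ℂ) / (1 + (t : ℂ) ^ 2)).im
      = z.im / ((t - z.re) ^ 2 + z.im ^ 2) := by
  have h2 : (t : ℂ) / (1 + (t : ℂ) ^ 2) = ((t / (1 + t ^ 2) : ℝ) : ℂ) := by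
    push_cast; ring
  rw [Complex.sub_im, h2, Complex.ofReal_im, one_div, Complex.inv_im]
  rw [Complex.sub_im, Complex.ofReal_im, Complex.normSq_apply, Complex.sub_re,
    Complex.sub_im, Complex.ofReal_re, Complex.ofReal_im]
  ring_nf

private lemma herg_locfin (ω : Measure ℝ)
    (hω : ∫⁻ t, ENNReal.ofReal (1 / (1 + t ^ 2)) ∂ω ≠ ⊤) :
    IsLocallyFiniteMeasure ω := by
  constructor
  intro x
  refine ⟨Icc (x - 1) (x + 1), Icc_mem_nhds (by linarith) (by linarith), ?_⟩
  set R : ℝ := |x| + 1 with hR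
  have hsub : Icc (x - 1) (x + 1) ⊆ Icc (-R) R := by
    intro t ht
    simp only [mem_Icc] at ht ⊢
    constructor <;> nlinarith [neg_abs_le x, le_abs_self x]
  have hconst : ∀ t ∈ Icc (-R) R, ENNReal.ofReal (1 / (1 + R ^ 2))
      ≤ ENNReal.ofReal (1 / (1 + t ^ 2)) := by
    intro t ht
    apply ENNReal.ofReal_le_ofReal
    apply one_div_le_one_div_of_le (by positivity)
    have h1 : |t| ≤ R := abs_le.2 ⟨ht.1, ht.2⟩
    nlinarith [sq_abs t, abs_nonneg t, mul_self_le_mul_self (abs_nonneg t) h1]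
  have key : ENNReal.ofReal (1 / (1 + R ^ 2)) * ω (Icc (-R) R)
      ≤ ∫⁻ t, ENNReal.ofReal (1 / (1 + t ^ 2)) ∂ω := by
    rw [← setLIntegral_const (Icc (-R) R) _]
    exact le_trans (setLIntegral_mono (by measurability) hconst)
      (setLIntegral_le_lintegral _ _)
  have hpos : ENNReal.ofReal (1 / (1 + R ^ 2)) ≠ 0 := by
    simp [ENNReal.ofReal_eq_zero, not_le]
    positivity
  have : ω (Icc (-R) R) < ⊤ := by
    by_contra h
    push_neg at h
    rw [top_le_iff.1 h, ENNReal.mul_top hpos] at key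
    exact hω (top_le_iff.1 key)
  exact lt_of_le_of_lt (measure_mono hsub) this

private lemma herg_arctan_integral (t y a b : ℝ) (hy : 0 < y) :
    ∫ x in a..b, y / ((x - t) ^ 2 + y ^ 2)
      = Real.arctan ((b - t) / y) - Real.arctan ((a - t) / y) := by
  have hderiv : ∀ x ∈ uIcc a b, HasDerivAt (fun u => Real.arctan ((u - t) / y))
      (y / ((x - t) ^ 2 + y ^ 2)) x := by
    intro x _
    have h1 : HasDerivAt (fun u : ℝ => (u - t) / y) (1 / y) x := by
      simpa using ((hasDerivAt_id x).sub_const t).div_const y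
    have h2 := (Real.hasDerivAt_arctan ((x - t) / y)).comp x h1
    refine h2.congr_deriv ?_
    have hy2 : y ^ 2 ≠ 0 := by positivity
    have hy0 : y ≠ 0 := hy.ne'
    field_simp
    ring
  apply intervalIntegral.integral_eq_sub_of_hasDerivAt hderiv
  apply Continuous.intervalIntegrable
  have hden : ∀ x : ℝ, (x - t) ^ 2 + y ^ 2 ≠ 0 := fun x => by positivity
  exact continuous_const.div (by continuity) hden

private lemma herg_Ioo_bound (ω : Measure ℝ) [SigmaFinite ω] (L : ℝ) (hL : 0 < L)
    (hP : ∀ x y : ℝ, 0 < y → (∫ t, y / ((t - x) ^ 2 + y ^ 2) ∂ω) ≤ L)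
    (hPint : ∀ x y : ℝ, 0 < y → Integrable (fun t => y / ((t - x) ^ 2 + y ^ 2)) ω)
    (a b : ℝ) (hab : a < b) :
    ω (Ioo a b) ≤ ENNReal.ofReal (L / Real.pi * (b - a)) := by
  have hkey : ∀ y : ℝ, 0 < y →
      ∫⁻ t, ENNReal.ofReal
          (Real.arctan ((b - t) / y) - Real.arctan ((a - t) / y)) ∂ω
        ≤ ENNReal.ofReal (L * (b - a)) := by
    intro y hy
    have hden : ∀ x t : ℝ, (0:ℝ) < (x - t) ^ 2 + y ^ 2 := fun x t => by positivity
    have hcont : Continuous (fun p : ℝ × ℝ => y / ((p.1 - p.2) ^ 2 + y ^ 2)) := by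
      apply continuous_const.div (by continuity)
      exact fun p => (hden p.1 p.2).ne'
    have hinner : ∀ t : ℝ,
        ∫⁻ x in Ioc a b, ENNReal.ofReal (y / ((x - t) ^ 2 + y ^ 2))
          = ENNReal.ofReal (Real.arctan ((b - t) / y) - Real.arctan ((a - t) / y)) := by
      intro t
      have hcont' : Continuous (fun x : ℝ => y / ((x - t) ^ 2 + y ^ 2)) :=
        hcont.comp (continuous_id.prodMk continuous_const)
      rw [← ofReal_integral_eq_lintegral_ofReal
          (hcont'.integrableOn_Ioc)
          (Eventually.of_forall fun x => by positivity)]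
      rw [← intervalIntegral.integral_of_le hab.le, herg_arctan_integral t y a b hy]
    have hmeas : AEMeasurable
        (Function.uncurry fun t x : ℝ => ENNReal.ofReal (y / ((x - t) ^ 2 + y ^ 2)))
        (ω.prod (volume.restrict (Ioc a b))) := by
      apply Measurable.aemeasurable
      apply (ENNReal.continuous_ofReal.comp _).measurable
      exact hcont.comp (continuous_snd.prodMk continuous_fst)
    calc ∫⁻ t, ENNReal.ofReal
            (Real.arctan ((b - t) / y) - Real.arctan ((a - t) / y)) ∂ω
        = ∫⁻ t, (∫⁻ x in Ioc a b, ENNReal.ofReal (y / ((x - t) ^ 2 + y ^ 2))) ∂ω :=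
          lintegral_congr fun t => (hinner t).symm
      _ = ∫⁻ x in Ioc a b, (∫⁻ t, ENNReal.ofReal (y / ((x - t) ^ 2 + y ^ 2)) ∂ω) :=
          lintegral_lintegral_swap hmeas
      _ ≤ ∫⁻ _x in Ioc a b, ENNReal.ofReal L := by
          apply lintegral_mono_ae
          apply Eventually.of_forall
          intro x
          have heq : (fun t : ℝ => ENNReal.ofReal (y / ((x - t) ^ 2 + y ^ 2)))
              = fun t => ENNReal.ofReal (y / ((t - x) ^ 2 + y ^ 2)) := by
            funext t; rw [show (x - t) ^ 2 = (t - x) ^ 2 by ring]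
          rw [heq, ← ofReal_integral_eq_lintegral_ofReal (hPint x y hy)
            (Eventually.of_forall fun t => by positivity)]
          exact ENNReal.ofReal_le_ofReal (hP x y hy)
      _ = ENNReal.ofReal (L * (b - a)) := by
          rw [setLIntegral_const, Real.volume_Ioc,
            ← ENNReal.ofReal_mul hL.le]
  have hfatou : ENNReal.ofReal Real.pi * ω (Ioo a b) ≤ ENNReal.ofReal (L * (b - a)) := by
    have hGmeas : ∀ n : ℕ, Measurable (fun t : ℝ => ENNReal.ofReal
        (Real.arctan ((b - t) / (1 / (n + 1))) - Real.arctan ((a - t) / (1 / (n + 1))))) := by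
      intro n
      apply (ENNReal.continuous_ofReal.comp _).measurable
      apply Continuous.sub
      · exact Real.continuous_arctan.comp ((continuous_const.sub continuous_id).div_const _)
      · exact Real.continuous_arctan.comp ((continuous_const.sub continuous_id).div_const _)
    have hGle : ∀ n : ℕ, (∫⁻ t, ENNReal.ofReal
        (Real.arctan ((b - t) / (1 / (n + 1))) - Real.arctan ((a - t) / (1 / (n + 1)))) ∂ω)
          ≤ ENNReal.ofReal (L * (b - a)) := fun n => hkey (1 / (n + 1)) (by positivity)
    have hlim : ∀ t ∈ Ioo a b, Tendsto (fun n : ℕ => ENNReal.ofReal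
        (Real.arctan ((b - t) / (1 / (n + 1))) - Real.arctan ((a - t) / (1 / (n + 1)))))
          atTop (𝓝 (ENNReal.ofReal Real.pi)) := by
      intro t ht
      have hnat : Tendsto (fun n : ℕ => ((n : ℝ) + 1)) atTop atTop :=
        tendsto_atTop_add_const_right atTop 1 tendsto_natCast_atTop_atTop
      have hb' : ∀ n : ℕ, (b - t) / (1 / ((n:ℝ) + 1)) = (b - t) * ((n:ℝ) + 1) := fun n => by
        rw [div_div_eq_mul_div, div_one, mul_comm]
      have ha' : ∀ n : ℕ, (a - t) / (1 / ((n:ℝ) + 1)) = (a - t) * ((n:ℝ) + 1) := fun n => by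
        rw [div_div_eq_mul_div, div_one, mul_comm]
      have h1 : Tendsto (fun n : ℕ => Real.arctan ((b - t) / (1 / (n + 1)))) atTop
          (𝓝 (Real.pi / 2)) := by
        apply (Real.tendsto_arctan_atTop.mono_right nhdsWithin_le_nhds).comp
        apply Tendsto.congr (fun n => (hb' n).symm)
        exact hnat.const_mul_atTop (by linarith [ht.2] : (0:ℝ) < b - t)
      have h2 : Tendsto (fun n : ℕ => Real.arctan ((a - t) / (1 / (n + 1)))) atTop
          (𝓝 (-(Real.pi / 2))) := by
        apply (Real.tendsto_arctan_atBot.mono_right nhdsWithin_le_nhds).comp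
        apply Tendsto.congr (fun n => (ha' n).symm)
        have h4 : Tendsto (fun n : ℕ => (t - a) * ((n:ℝ) + 1)) atTop atTop :=
          hnat.const_mul_atTop (by linarith [ht.1] : (0:ℝ) < t - a)
        have h5 := tendsto_neg_atTop_atBot.comp h4
        apply h5.congr
        intro n
        simp only [Function.comp_apply]
        ring
      have h3 := h1.sub h2
      rw [show Real.pi / 2 - -(Real.pi / 2) = Real.pi by ring] at h3
      exact (ENNReal.continuous_ofReal.tendsto _).comp h3
    calc ENNReal.ofReal Real.pi * ω (Ioo a b)
        = ∫⁻ t, (Ioo a b).indicator (fun _ => ENNReal.ofReal Real.pi) t ∂ω := by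
          rw [lintegral_indicator measurableSet_Ioo, setLIntegral_const]
      _ ≤ ∫⁻ t, liminf (fun n : ℕ => ENNReal.ofReal
            (Real.arctan ((b - t) / (1 / (n + 1))) - Real.arctan ((a - t) / (1 / (n + 1)))))
            atTop ∂ω := by
          apply lintegral_mono
          intro t
          by_cases ht : t ∈ Ioo a b
          · rw [indicator_of_mem ht]
            exact le_of_eq (hlim t ht).liminf_eq.symm
          · rw [indicator_of_notMem ht]; exact zero_le
      _ ≤ liminf (fun n : ℕ => ∫⁻ t, ENNReal.ofReal
            (Real.arctan ((b - t) / (1 / (n + 1))) - Real.arctan ((a - t) / (1 / (n + 1)))) ∂ω)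
            atTop := lintegral_liminf_le hGmeas
      _ ≤ ENNReal.ofReal (L * (b - a)) :=
          (Filter.liminf_le_liminf (Eventually.of_forall hGle)).trans_eq (liminf_const _)
  have hπ : (0:ℝ) < Real.pi := Real.pi_pos
  rw [show L / Real.pi * (b - a) = L * (b - a) / Real.pi by ring,
    ENNReal.ofReal_div_of_pos hπ]
  rw [ENNReal.le_div_iff_mul_le (Or.inl (by simp [ENNReal.ofReal_eq_zero, not_le, hπ]))
    (Or.inl ENNReal.ofReal_ne_top)]
  rwa [mul_comm]

private lemma herg_meas_le (ω : Measure ℝ) [IsLocallyFiniteMeasure ω] (C : ℝ) (hC : 0 < C)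
    (hIoo : ∀ a b : ℝ, a < b → ω (Ioo a b) ≤ ENNReal.ofReal (C * (b - a))) :
    ∀ s : Set ℝ, ω s ≤ ENNReal.ofReal C * volume s := by
  have hball : ∀ (x r : ℝ), 0 < r →
      ω (closedBall x r) ≤ ENNReal.ofReal C * volume (closedBall x r) := by
    intro x r hr
    rw [Real.volume_closedBall, ← ENNReal.ofReal_mul hC.le]
    have hev : ∀ ε ∈ Ioi (0:ℝ), ω (closedBall x r) ≤ ENNReal.ofReal (C * (2 * r + 2 * ε)) := by
      intro ε hε
      have hsub : closedBall x r ⊆ Ioo (x - r - ε) (x + r + ε) := by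
        rw [Real.closedBall_eq_Icc]
        intro t ht
        simp only [mem_Icc] at ht
        simp only [mem_Ioo]
        constructor <;> [linarith [ht.1, mem_Ioi.1 hε]; linarith [ht.2, mem_Ioi.1 hε]]
      refine (measure_mono hsub).trans ?_
      have := hIoo (x - r - ε) (x + r + ε) (by linarith [mem_Ioi.1 hε])
      rw [show x + r + ε - (x - r - ε) = 2 * r + 2 * ε by ring] at this
      exact this
    have htend : Tendsto (fun ε : ℝ => ENNReal.ofReal (C * (2 * r + 2 * ε))) (𝓝[>] 0)
        (𝓝 (ENNReal.ofReal (C * (2 * r)))) := by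
      apply Tendsto.mono_left _ nhdsWithin_le_nhds
      apply (ENNReal.continuous_ofReal.tendsto _).comp
      have : Continuous (fun ε : ℝ => C * (2 * r + 2 * ε)) := by continuity
      simpa using this.tendsto 0
    exact ge_of_tendsto htend (eventually_nhdsWithin_of_forall hev)
  intro s
  have hν : IsLocallyFiniteMeasure (ENNReal.ofReal C • volume : Measure ℝ) := by
    constructor
    intro x
    refine ⟨ball x 1, ball_mem_nhds x one_pos, ?_⟩
    rw [Measure.smul_apply, smul_eq_mul]
    exact ENNReal.mul_lt_top ENNReal.ofReal_lt_top (by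
      rw [Real.volume_ball]; exact ENNReal.ofReal_lt_top)
  have := (Besicovitch.vitaliFamily ω).measure_le_of_frequently_le
    (ENNReal.ofReal C • volume) Measure.AbsolutelyContinuous.rfl s ?_
  · simpa using this
  · intro x _
    apply Eventually.frequently
    filter_upwards [VitaliFamily.eventually_filterAt_mem_setsAt _ x] with t ht
    obtain ⟨r, hr, rfl⟩ := ht
    rw [Measure.smul_apply, smul_eq_mul]
    exact hball x r hr

private lemma herg_density (ω : Measure ℝ) [IsLocallyFiniteMeasure ω] (C : ℝ) (hC : 0 < C)
    (hle : ∀ s : Set ℝ, ω s ≤ ENNReal.ofReal C * volume s) :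
    ∃ g : ℝ → ℝ, Measurable g ∧ (∀ x, 0 ≤ g x ∧ g x ≤ C) ∧
      ω = volume.withDensity (fun x => ENNReal.ofReal (g x)) := by
  have hac : ω ≪ volume := by
    refine Measure.AbsolutelyContinuous.mk fun s _ hs0 => ?_
    refine le_antisymm ((hle s).trans ?_) zero_le
    simp [hs0]
  have hbd : ∀ᵐ x ∂volume, ω.rnDeriv volume x ≤ ENNReal.ofReal C := by
    filter_upwards [Besicovitch.ae_tendsto_rnDeriv ω volume] with x hx
    apply le_of_tendsto hx
    filter_upwards [self_mem_nhdsWithin] with r hr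
    have hrpos : (0:ℝ) < r := hr
    have hvol : volume (closedBall x r) = ENNReal.ofReal (2 * r) := Real.volume_closedBall x r
    rw [ENNReal.div_le_iff_le_mul (Or.inl (by
        rw [hvol]; simp [ENNReal.ofReal_eq_zero, not_le]; linarith))
      (Or.inl (by rw [hvol]; exact ENNReal.ofReal_ne_top))]
    exact hle (closedBall x r)
  refine ⟨fun x => min ((ω.rnDeriv volume x).toReal) C, ?_, ?_, ?_⟩
  · exact (Measure.measurable_rnDeriv ω volume).ennreal_toReal.min measurable_const
  · exact fun x => ⟨le_min ENNReal.toReal_nonneg hC.le, min_le_right _ _⟩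
  · have h2 : (fun x => ENNReal.ofReal (min ((ω.rnDeriv volume x).toReal) C))
        =ᵐ[volume] ω.rnDeriv volume := by
      filter_upwards [hbd] with x hx
      have hne : ω.rnDeriv volume x ≠ ⊤ := (hx.trans_lt ENNReal.ofReal_lt_top).ne
      have h1 : (ω.rnDeriv volume x).toReal ≤ C := ENNReal.toReal_le_of_le_ofReal hC.le hx
      rw [min_eq_left h1, ENNReal.ofReal_toReal hne]
    exact ((withDensity_congr_ae h2).trans
      (Measure.withDensity_rnDeriv_eq ω volume hac)).symm

end HerglotzAux

/-- A Herglotz function with bounded imaginary part has `d = 0` and a purely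
absolutely continuous representing measure with density bounded by `L/π`. -/
theorem herglotz_bounded_imaginary_part (m : ℂ → ℂ) (c d : ℝ)
    (hd : 0 ≤ d) (ω : Measure ℝ)
    (hω : ∫⁻ t, ENNReal.ofReal (1 / (1 + t ^ 2)) ∂ω ≠ ⊤)
    (hint : ∀ z : ℂ, 0 < z.im →
      Integrable (fun t : ℝ => 1 / ((t : ℂ) - z) - (t : ℂ) / (1 + (t : ℂ) ^ 2)) ω)
    (hrep : ∀ z : ℂ, 0 < z.im →
      m z = (c : ℂ) + (d : ℂ) * z
        + ∫ t, (1 / ((t : ℂ) - z) - (t : ℂ) / (1 + (t : ℂ) ^ 2)) ∂ω)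
    (L : ℝ) (hL : 0 < L)
    (hbd : ∀ z : ℂ, 0 < z.im → 0 ≤ (m z).im ∧ (m z).im ≤ L) :
    d = 0 ∧ ∃ g : ℝ → ℝ, Measurable g ∧ (∀ lam, 0 ≤ g lam ∧ g lam ≤ L / Real.pi) ∧
      ω = volume.withDensity (fun lam => ENNReal.ofReal (g lam)) := by
  haveI : IsLocallyFiniteMeasure ω := herg_locfin ω hω
  -- integrability of the Poisson kernel
  have hPint0 : ∀ z : ℂ, 0 < z.im →
      Integrable (fun t : ℝ => z.im / ((t - z.re) ^ 2 + z.im ^ 2)) ω := by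
    intro z hz
    exact (Integrable.im (hint z hz)).congr
      (Eventually.of_forall fun t => herg_im_eq z t)
  have hPint : ∀ x y : ℝ, 0 < y →
      Integrable (fun t : ℝ => y / ((t - x) ^ 2 + y ^ 2)) ω := by
    intro x y hy
    exact hPint0 ⟨x, y⟩ hy
  -- imaginary part formula
  have him : ∀ z : ℂ, 0 < z.im →
      (m z).im = d * z.im + ∫ t, z.im / ((t - z.re) ^ 2 + z.im ^ 2) ∂ω := by
    intro z hz
    rw [hrep z hz]
    simp only [Complex.add_im, Complex.ofReal_im, Complex.mul_im, Complex.ofReal_re,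
      Complex.ofReal_im, zero_add, zero_mul, sub_zero, add_zero]
    have h4 := integral_im (hint z hz)
    simp only [RCLike.im_to_complex] at h4
    rw [← h4, integral_congr_ae (Eventually.of_forall fun t => herg_im_eq z t)]
  -- Poisson bound
  have hP : ∀ x y : ℝ, 0 < y →
      (∫ t, y / ((t - x) ^ 2 + y ^ 2) ∂ω) ≤ L := by
    intro x y hy
    set z : ℂ := ⟨x, y⟩ with hzdef
    have hz : 0 < z.im := hy
    have h1 := (hbd z hz).2
    rw [him z hz] at h1
    have h1' : d * y + (∫ t, y / ((t - x) ^ 2 + y ^ 2) ∂ω) ≤ L := h1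
    have h2 : 0 ≤ d * y := mul_nonneg hd hy.le
    linarith
  -- d = 0
  have hd0 : d = 0 := by
    by_contra h
    have hdpos : 0 < d := lt_of_le_of_ne hd (Ne.symm h)
    set y : ℝ := (L + 1) / d with hy
    have hypos : 0 < y := div_pos (by linarith) hdpos
    set z : ℂ := ⟨0, y⟩ with hzdef
    have hz : 0 < z.im := hypos
    have h1 := (hbd z hz).2
    rw [him z hz] at h1
    have h2 : 0 ≤ ∫ t, z.im / ((t - z.re) ^ 2 + z.im ^ 2) ∂ω :=
      integral_nonneg fun t => by positivity
    have h3 : d * z.im = L + 1 := by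
      show d * y = L + 1
      rw [hy]; field_simp
    linarith
  refine ⟨hd0, ?_⟩
  have hCpos : 0 < L / Real.pi := div_pos hL Real.pi_pos
  have hIoo : ∀ a b : ℝ, a < b →
      ω (Ioo a b) ≤ ENNReal.ofReal (L / Real.pi * (b - a)) :=
    fun a b hab => herg_Ioo_bound ω L hL hP hPint a b hab
  exact herg_density ω (L / Real.pi) hCpos (herg_meas_le ω (L / Real.pi) hCpos hIoo)
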